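/- arXiv:2108.02434 — 2 statements merged into one kernel-verified Lean document; each statement's English description precedes it below -/
import Mathlib

section
/- Let m, k be natural numbers, C a k×m real matrix, A₁₁, B₁₁ real m×m matrices, and define the (m+k)×(m+k) block matrices A = [[A₁₁, A₁₁Cᵀ], [C A₁₁, C A₁₁ Cᵀ]] and B = [[B₁₁, B₁₁Cᵀ], [C B₁₁, C B₁₁ Cᵀ]]. Then rank(B) = rank(B₁₁), and for every λ ∈ ℝ one has rank(A − λB) < rank(B) if and only if rank(A₁₁ − λB₁₁) < rank(B₁₁). -/
open Matrix

lemma aux_rank {m k : ℕ} (C : Matrix (Fin k) (Fin m) ℝ)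
    (M : Matrix (Fin m) (Fin m) ℝ) :
    (fromRows (1 : Matrix (Fin m) (Fin m) ℝ) C * M *
      fromCols (1 : Matrix (Fin m) (Fin m) ℝ) Cᵀ).rank = M.rank := by
  set E : Matrix (Fin m ⊕ Fin k) (Fin m) ℝ := fromRows 1 C with hE
  set F : Matrix (Fin m) (Fin m ⊕ Fin k) ℝ := fromCols 1 Cᵀ with hF
  set G : Matrix (Fin m) (Fin m ⊕ Fin k) ℝ := fromCols 1 0 with hG
  set H : Matrix (Fin m ⊕ Fin k) (Fin m) ℝ := fromRows 1 0 with hH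
  have h1 : G * E = 1 := by rw [hG, hE, fromCols_mul_fromRows]; simp
  have h2 : F * H = 1 := by rw [hF, hH, fromCols_mul_fromRows]; simp
  apply le_antisymm
  · exact le_trans (Matrix.rank_mul_le_left _ _) (Matrix.rank_mul_le_right _ _)
  · have h : M = G * (E * M * F) * H := by
      calc M = (G * E) * M * (F * H) := by rw [h1, h2, Matrix.one_mul, Matrix.mul_one]
        _ = _ := by simp only [Matrix.mul_assoc]
    conv_lhs => rw [h]
    exact le_trans (Matrix.rank_mul_le_left _ _) (Matrix.rank_mul_le_right _ _)

lemma aux_eq {m k : ℕ} (C : Matrix (Fin k) (Fin m) ℝ)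
    (M : Matrix (Fin m) (Fin m) ℝ) :
    fromBlocks M (M * Cᵀ) (C * M) (C * M * Cᵀ) = fromRows (1 : Matrix (Fin m) (Fin m) ℝ) C * M * fromCols 1 Cᵀ := by
  rw [fromRows_mul, fromRows_mul_fromCols]
  simp [Matrix.mul_assoc]

theorem stmt_4 {m k : ℕ} (C : Matrix (Fin k) (Fin m) ℝ)
    (A₁₁ B₁₁ : Matrix (Fin m) (Fin m) ℝ)
    (A B : Matrix (Fin m ⊕ Fin k) (Fin m ⊕ Fin k) ℝ)
    (hA : A = Matrix.fromBlocks A₁₁ (A₁₁ * Cᵀ) (C * A₁₁) (C * A₁₁ * Cᵀ))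
    (hB : B = Matrix.fromBlocks B₁₁ (B₁₁ * Cᵀ) (C * B₁₁) (C * B₁₁ * Cᵀ)) :
    B.rank = B₁₁.rank ∧
    ∀ lam : ℝ, (A - lam • B).rank < B.rank ↔ (A₁₁ - lam • B₁₁).rank < B₁₁.rank := by
  subst hA hB
  rw [aux_eq, aux_eq, aux_rank]
  refine ⟨rfl, fun lam => ?_⟩
  have h : fromRows (1 : Matrix (Fin m) (Fin m) ℝ) C * A₁₁ * fromCols (1 : Matrix (Fin m) (Fin m) ℝ) Cᵀ -
      lam • (fromRows (1 : Matrix (Fin m) (Fin m) ℝ) C * B₁₁ * fromCols (1 : Matrix (Fin m) (Fin m) ℝ) Cᵀ) =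
      fromRows (1 : Matrix (Fin m) (Fin m) ℝ) C * (A₁₁ - lam • B₁₁) * fromCols (1 : Matrix (Fin m) (Fin m) ℝ) Cᵀ := by
    rw [Matrix.mul_sub, Matrix.mul_smul, Matrix.sub_mul, Matrix.smul_mul]
  rw [h, aux_rank]
end

section
/- Let A and B be real symmetric positive semidefinite n×n matrices such that every vector x with Bx = 0 also satisfies Ax = 0. Then rank(A − βB) ≤ rank(B) for every β ∈ ℝ, and rank(A − βB) = rank(B) for every β < 0. In particular, the maximum over β ∈ ℝ of rank(A − βB) equals rank(B). -/
open Matrix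

lemma rank_le_of_ker_le {n : ℕ} {M N : Matrix (Fin n) (Fin n) ℝ}
    (h : LinearMap.ker N.mulVecLin ≤ LinearMap.ker M.mulVecLin) :
    M.rank ≤ N.rank := by
  have hM := LinearMap.finrank_range_add_finrank_ker M.mulVecLin
  have hN := LinearMap.finrank_range_add_finrank_ker N.mulVecLin
  have hk : Module.finrank ℝ (LinearMap.ker N.mulVecLin) ≤
      Module.finrank ℝ (LinearMap.ker M.mulVecLin) := Submodule.finrank_mono h
  simp only [Module.finrank_fintype_fun_eq_card, Fintype.card_fin] at hM hN
  rw [Matrix.rank, Matrix.rank]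
  omega

theorem stmt_5 {n : ℕ} (A B : Matrix (Fin n) (Fin n) ℝ)
    (hA : A.PosSemidef) (hB : B.PosSemidef)
    (hker : ∀ x : Fin n → ℝ, B.mulVec x = 0 → A.mulVec x = 0) :
    (∀ β : ℝ, (A - β • B).rank ≤ B.rank) ∧
    (∀ β : ℝ, β < 0 → (A - β • B).rank = B.rank) ∧
    IsGreatest (Set.range fun β : ℝ => (A - β • B).rank) B.rank := by
  have hle : ∀ β : ℝ, (A - β • B).rank ≤ B.rank := by
    intro β
    apply rank_le_of_ker_le
    intro x hx
    simp only [LinearMap.mem_ker, mulVecLin_apply] at hx ⊢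
    rw [sub_mulVec, smul_mulVec, hx, hker x hx]
    simp
  have heq : ∀ β : ℝ, β < 0 → (A - β • B).rank = B.rank := by
    intro β hβ
    refine le_antisymm (hle β) (rank_le_of_ker_le ?_)
    intro x hx
    simp only [LinearMap.mem_ker, mulVecLin_apply] at hx ⊢
    -- x ⬝ᵥ (A - βB) x = 0
    have h0 : x ⬝ᵥ A.mulVec x + (-β) * (x ⬝ᵥ B.mulVec x) = 0 := by
      have := congrArg (fun v => x ⬝ᵥ v) hx
      simp only [sub_mulVec, smul_mulVec, dotProduct_sub, dotProduct_smul,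
        dotProduct_zero, smul_eq_mul] at this
      linarith
    have hAx : 0 ≤ x ⬝ᵥ A.mulVec x := by
      have := hA.dotProduct_mulVec_nonneg x; simpa using this
    have hBx : 0 ≤ x ⬝ᵥ B.mulVec x := by
      have := hB.dotProduct_mulVec_nonneg x; simpa using this
    have hBx0 : x ⬝ᵥ B.mulVec x = 0 := by nlinarith
    have : B.mulVec x = 0 := by
      have := (hB.dotProduct_mulVec_zero_iff x).mp (by simpa using hBx0)
      simpa using this
    exact this
  refine ⟨hle, heq, ⟨-1, by simpa using heq (-1) (by norm_num)⟩, ?_⟩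
  rintro r ⟨β, rfl⟩
  exact hle β
end
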